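/- Let (X,S,T) be a strictly ergodic topological dynamical system with commuting homeomorphisms and unique invariant measure μ. Suppose there is a topological factor map π_W : X → W onto a strictly ergodic system (W,τ), where S acts on W as the identity and T acts as τ, such that π_W realizes the measurable factor of (X,μ,S,T) associated with the σ-algebra I_S of S-invariant sets. Then the system (Q_S(X), G_S) is uniquely ergodic, and its unique invariant measure is μ_S, the relatively independent self-joining of μ over I_S. -/

import Mathlib

open MeasureTheory Topology
open scoped symmDiff

/-- The σ-algebra of `R`-invariant measurable sets. -/
def invSigma {X : Type*} [MeasurableSpace X] (R : X → X) : MeasurableSpace X where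
  MeasurableSet' s := MeasurableSet s ∧ R ⁻¹' s = s
  measurableSet_empty := ⟨MeasurableSet.empty, rfl⟩
  measurableSet_compl s hs := ⟨hs.1.compl, by rw [Set.preimage_compl, hs.2]⟩
  measurableSet_iUnion f hf := ⟨MeasurableSet.iUnion fun i => (hf i).1, by
    rw [Set.preimage_iUnion]; exact Set.iUnion_congr fun i => (hf i).2⟩

/-- `μ2` is the relatively independent self-joining of `μ` over `I_R`. -/
def IsRelIndJoining {X : Type*} [MeasurableSpace X] (μ : Measure X) (R : X → X)
    (μ2 : Measure (X × X)) : Prop :=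
  ∀ f0 f1 : X → ℝ, Measurable f0 → Measurable f1 →
    (∃ C, ∀ x, |f0 x| ≤ C) → (∃ C, ∀ x, |f1 x| ≤ C) →
    ∫ p, f0 p.1 * f1 p.2 ∂μ2 =
      ∫ x, (μ[f0 | invSigma R]) x * (μ[f1 | invSigma R]) x ∂μ

/-- The dynamical pair cube `Q_S(X)`. -/
def pairQ {X : Type*} [TopologicalSpace X] (S : X ≃ₜ X) : Set (X × X) :=
  closure {p | ∃ (x : X) (i : ℤ), p = (x, (S.toEquiv ^ i) x)}

/-- The permutation `id × S` of `X²`. -/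
def side2 {X : Type*} (S : X ≃ X) : Equiv.Perm (X × X) :=
  (Equiv.refl X).prodCongr S

/-- The diagonal permutation `g × g` of `X²`. -/
def diag2 {X : Type*} (g : X ≃ X) : Equiv.Perm (X × X) :=
  g.prodCongr g

/-- The group `G_S` generated by `id×S` and `g×g` for `g` in the group generated by
`S` and `T`. -/
def GS {X : Type*} (S T : X ≃ X) : Subgroup (Equiv.Perm (X × X)) :=
  Subgroup.closure ({side2 S} ∪ {d | ∃ g ∈ Subgroup.closure {S, T}, d = diag2 g})


open MeasureTheory Topology Filter
open scoped symmDiff ENNReal NNReal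
set_option linter.unusedSectionVars false
set_option linter.unusedVariables false

namespace PCUE

variable {X : Type*} [MeasurableSpace X]

theorem invSigma_le (R : X → X) : invSigma R ≤ ‹MeasurableSpace X› := fun _ hs => hs.1

theorem measurableSet_invSigma {R : X → X} {s : Set X} :
    MeasurableSet[invSigma R] s ↔ MeasurableSet s ∧ R ⁻¹' s = s := Iff.rfl

/-- A function measurable w.r.t. the invariant σ-algebra is strictly invariant. -/
theorem comp_eq_of_measurable_invSigma {R : X → X} {g : X → ℝ}
    (hg : Measurable[invSigma R] g) : g ∘ R = g := by
  funext x
  have h : MeasurableSet[invSigma R] (g ⁻¹' {g x}) := hg (measurableSet_singleton _)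
  have hx : x ∈ R ⁻¹' (g ⁻¹' {g x}) := by rw [h.2]; exact rfl
  exact hx

/-- A Borel function that is strictly invariant is `invSigma`-measurable. -/
theorem measurable_invSigma_of_comp_eq {R : X → X} {g : X → ℝ}
    (hg : Measurable g) (h : g ∘ R = g) : Measurable[invSigma R] g := by
  intro c hc
  refine ⟨hg hc, ?_⟩
  have : R ⁻¹' (g ⁻¹' c) = (g ∘ R) ⁻¹' c := rfl
  rw [this, h]

private noncomputable def psi (y : ℝ) : ℝ := y / (1 - |y|)

private lemma psi_phi (a : ℝ) : psi (a / (1 + |a|)) = a := by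
  have h : (0:ℝ) < 1 + |a| := by positivity
  have h2 : |a / (1 + |a|)| = |a| / (1 + |a|) := by
    rw [abs_div, abs_of_pos h]
  rw [psi, h2]
  have h3 : 1 - |a| / (1 + |a|) = 1 / (1 + |a|) := by field_simp; ring
  rw [h3]
  field_simp

private lemma measurable_psi : Measurable psi := by
  apply Measurable.div measurable_id
  exact measurable_const.sub measurable_abs

/-- An a.e. invariant function is a.e. equal to an `invSigma`-measurable function. -/
theorem aeStronglyMeasurable'_invSigma_of_ae_comp_eq {μ : Measure X} {S : X → X}
    (hS : MeasurePreserving S μ μ) {f : X → ℝ} (hf : AEStronglyMeasurable f μ)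
    (hinv : f ∘ S =ᵐ[μ] f) : AEStronglyMeasurable[invSigma S] f μ := by
  obtain ⟨f₀, hf₀m, hff₀⟩ : ∃ f₀, Measurable f₀ ∧ f =ᵐ[μ] f₀ :=
    ⟨hf.aemeasurable.mk f, hf.aemeasurable.measurable_mk, hf.aemeasurable.ae_eq_mk⟩
  have h0 : f₀ ∘ S =ᵐ[μ] f₀ := by
    have h1 : f₀ ∘ S =ᵐ[μ] f ∘ S := hS.quasiMeasurePreserving.ae_eq_comp hff₀.symm
    exact h1.trans (hinv.trans hff₀)
  have hn : ∀ n : ℕ, f₀ ∘ S^[n] =ᵐ[μ] f₀ := by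
    intro n
    induction n with
    | zero => simp [Function.iterate_zero]
    | succ n ih =>
      have h1 : (f₀ ∘ S^[n]) ∘ S =ᵐ[μ] f₀ ∘ S := hS.quasiMeasurePreserving.ae_eq_comp ih
      have h2 : f₀ ∘ S^[n + 1] = (f₀ ∘ S^[n]) ∘ S := by
        funext x; simp [Function.iterate_succ_apply]
      rw [h2]
      exact h1.trans h0
  set v : X → ℝ := fun x => liminf (fun n => f₀ (S^[n] x) / (1 + |f₀ (S^[n] x)|)) atTop with hv
  have hvm : Measurable v := by
    apply Measurable.liminf
    intro n
    have : Measurable (f₀ ∘ S^[n]) := hf₀m.comp (hS.measurable.iterate n)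
    exact this.div (measurable_const.add this.abs)
  have hvinv : v ∘ S = v := by
    funext x
    have : (fun n => f₀ (S^[n] (S x)) / (1 + |f₀ (S^[n] (S x))|)) =
        fun n => f₀ (S^[n + 1] x) / (1 + |f₀ (S^[n + 1] x)|) := by
      funext n; rw [Function.iterate_succ_apply]
    show liminf _ atTop = liminf _ atTop
    rw [this]
    exact liminf_nat_add (fun n => f₀ (S^[n] x) / (1 + |f₀ (S^[n] x)|)) 1
  refine ⟨psi ∘ v, ?_, ?_⟩
  · refine Measurable.stronglyMeasurable ?_
    exact @Measurable.comp X ℝ ℝ (invSigma S) _ _ psi v measurable_psi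
      (measurable_invSigma_of_comp_eq hvm hvinv)
  · have hae : ∀ᵐ x ∂μ, (∀ n : ℕ, f₀ (S^[n] x) = f₀ x) ∧ f x = f₀ x := by
      refine ((ae_all_iff.2 fun n => (hn n)).and hff₀).mono ?_
      exact fun x hx => ⟨fun n => hx.1 n, hx.2⟩
    refine hae.mono fun x hx => ?_
    have : v x = f₀ x / (1 + |f₀ x|) := by
      rw [hv]
      simp only [hx.1]
      exact liminf_const _
    show f x = psi (v x)
    rw [this, psi_phi, hx.2]

section MET

variable {X : Type*} [MeasurableSpace X] {μ : Measure X} [IsProbabilityMeasure μ]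

theorem preimage_iterate_invariant {S : X → X} {s : Set X} (hinv : S ⁻¹' s = s) :
    ∀ i : ℕ, S^[i] ⁻¹' s = s := by
  intro i
  induction i with
  | zero => simp
  | succ i ih =>
    rw [Function.iterate_succ, Set.preimage_comp, ih, hinv]

theorem setIntegral_comp_of_invariant {S : X → X} (hS : MeasurePreserving S μ μ) {s : Set X}
    (hs : MeasurableSet s) (hinv : S ⁻¹' s = s) {f : X → ℝ} (hf : AEStronglyMeasurable f μ) :
    ∫ x in s, f (S x) ∂μ = ∫ x in s, f x ∂μ := by
  have h1 : μ.restrict s = Measure.map S (μ.restrict s) := by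
    conv_lhs => rw [← hS.map_eq]
    rw [Measure.restrict_map hS.measurable hs, hinv]
  have h2 : ∫ x in s, f x ∂μ = ∫ x, f x ∂(Measure.map S (μ.restrict s)) := by rw [← h1]
  rw [h2, integral_map hS.measurable.aemeasurable (by rw [← h1]; exact hf.restrict)]

theorem setIntegral_iterate_of_invariant {S : X → X} (hS : MeasurePreserving S μ μ) {s : Set X}
    (hs : MeasurableSet s) (hinv : S ⁻¹' s = s) {f : X → ℝ} (hf : AEStronglyMeasurable f μ)
    (i : ℕ) : ∫ x in s, f (S^[i] x) ∂μ = ∫ x in s, f x ∂μ :=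
  setIntegral_comp_of_invariant (hS.iterate i) hs (preimage_iterate_invariant hinv i) hf

theorem abs_birkhoffAverage_le {S : X → X} {g : X → ℝ} {C : ℝ} (hC : 0 ≤ C)
    (hgb : ∀ x, |g x| ≤ C) (N : ℕ) (x : X) : |birkhoffAverage ℝ S g N x| ≤ C := by
  rcases Nat.eq_zero_or_pos N with h | h
  · subst h
    simp [birkhoffAverage, birkhoffSum, hC]
  · have h1 : |birkhoffSum S g N x| ≤ N * C := by
      refine (Finset.abs_sum_le_sum_abs _ _).trans ?_
      calc ∑ i ∈ Finset.range N, |g (S^[i] x)| ≤ ∑ _i ∈ Finset.range N, C :=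
            Finset.sum_le_sum fun i _ => hgb _
        _ = N * C := by simp [mul_comm]
    have hN : (0:ℝ) < N := by exact_mod_cast h
    calc |birkhoffAverage ℝ S g N x| = (N:ℝ)⁻¹ * |birkhoffSum S g N x| := by
          rw [birkhoffAverage, smul_eq_mul, abs_mul, abs_inv, abs_of_pos hN]
      _ ≤ (N:ℝ)⁻¹ * (N * C) := by
          exact mul_le_mul_of_nonneg_left h1 (by positivity)
      _ = C := by field_simp

theorem measurable_birkhoffAverage {S : X → X} (hS : Measurable S) {g : X → ℝ}
    (hg : Measurable g) (N : ℕ) : Measurable (birkhoffAverage ℝ S g N) := by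
  have : Measurable (birkhoffSum S g N) := by
    apply Finset.measurable_sum
    intro i _
    exact hg.comp (hS.iterate i)
  show Measurable fun x => (N:ℝ)⁻¹ • birkhoffSum S g N x
  exact measurable_const.mul this

set_option synthInstance.maxHeartbeats 1000000 in
theorem met_L1 {S : X → X} (hS : MeasurePreserving S μ μ) {g : X → ℝ}
    (hg : Measurable g) {C : ℝ} (hgb : ∀ x, |g x| ≤ C) :
    Filter.Tendsto (fun N => ∫ x, |birkhoffAverage ℝ S g N x - (μ[g|invSigma S]) x| ∂μ)
      Filter.atTop (𝓝 0) := by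
  haveI : Fact ((1:ℝ≥0∞) ≤ 2) := ⟨one_le_two⟩
  have hm : invSigma S ≤ ‹MeasurableSpace X› := invSigma_le S
  haveI : SigmaFinite (μ.trim hm) := by
    have : IsFiniteMeasure (μ.trim hm) := by
      constructor
      rw [trim_measurableSet_eq hm MeasurableSet.univ]
      exact measure_lt_top μ _
    infer_instance
  have hgm2 : MemLp g 2 μ :=
    MemLp.of_bound hg.aestronglyMeasurable C (Filter.Eventually.of_forall fun x => by
      simpa [Real.norm_eq_abs] using hgb x)
  set G : Lp ℝ 2 μ := hgm2.toLp g with hG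
  set U : Lp ℝ 2 μ →L[ℝ] Lp ℝ 2 μ :=
    (Lp.compMeasurePreservingₗᵢ (p := 2) (E := ℝ) ℝ S hS).toContinuousLinearMap with hUdef
  have hUnorm : ‖U‖ ≤ 1 := LinearIsometry.norm_toContinuousLinearMap_le _
  have hconv := U.tendsto_birkhoffAverage_orthogonalProjection hUnorm G
  set P : Lp ℝ 2 μ := ↑((LinearMap.eqLocus (U : Lp ℝ 2 μ →ₗ[ℝ] Lp ℝ 2 μ) ((1 : Lp ℝ 2 μ →L[ℝ] Lp ℝ 2 μ) : Lp ℝ 2 μ →ₗ[ℝ] Lp ℝ 2 μ)).orthogonalProjectionOnto G) with hPdef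
  have hUapp : ∀ h : Lp ℝ 2 μ, (U h : X → ℝ) =ᵐ[μ] (h : X → ℝ) ∘ S := fun h =>
    Lp.coeFn_compMeasurePreserving h hS
  have hUfix : U P = P := by
    rw [hPdef]
    have h2 := ((LinearMap.eqLocus (U : Lp ℝ 2 μ →ₗ[ℝ] Lp ℝ 2 μ) ((1 : Lp ℝ 2 μ →L[ℝ] Lp ℝ 2 μ) : Lp ℝ 2 μ →ₗ[ℝ] Lp ℝ 2 μ)).orthogonalProjectionOnto G).2
    rw [LinearMap.mem_eqLocus] at h2
    simpa using h2
  have hiter : ∀ n : ℕ, ((U^[n] G : Lp ℝ 2 μ) : X → ℝ) =ᵐ[μ] fun x => g (S^[n] x) := by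
    intro n
    induction n with
    | zero => simpa using hgm2.coeFn_toLp
    | succ n ih =>
      rw [Function.iterate_succ_apply']
      refine (hUapp (U^[n] G)).trans ?_
      refine (hS.quasiMeasurePreserving.ae_eq_comp ih).trans ?_
      apply Filter.Eventually.of_forall
      intro x
      simp [Function.comp, Function.iterate_succ_apply]
  have hsum : ∀ N : ℕ, ((birkhoffSum U _root_.id N G : Lp ℝ 2 μ) : X → ℝ) =ᵐ[μ]
      birkhoffSum S g N := by
    intro N
    induction N with
    | zero =>
      have h0 : birkhoffSum U _root_.id 0 G = 0 := by simp only [birkhoffSum,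
        Finset.range_zero, Finset.sum_empty]
      rw [h0]
      filter_upwards [Lp.coeFn_zero ℝ 2 μ] with x hx
      simp [hx, birkhoffSum]
    | succ N ih =>
      have h1 : birkhoffSum U _root_.id (N+1) G
          = birkhoffSum U _root_.id N G + U^[N] G := birkhoffSum_succ _ _ _ _
      rw [h1]
      filter_upwards [Lp.coeFn_add (birkhoffSum U _root_.id N G) (U^[N] G), ih, hiter N]
        with x h1x h2x h3x
      simp only [h1x, Pi.add_apply, h2x, h3x, birkhoffSum_succ]
  have hAN : ∀ N : ℕ, ((birkhoffAverage ℝ U _root_.id N G : Lp ℝ 2 μ) : X → ℝ) =ᵐ[μ]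
      birkhoffAverage ℝ S g N := by
    intro N
    have h1 : birkhoffAverage ℝ U _root_.id N G = (N:ℝ)⁻¹ • birkhoffSum U _root_.id N G := rfl
    rw [h1]
    filter_upwards [Lp.coeFn_smul ((N:ℝ)⁻¹) (birkhoffSum U _root_.id N G), hsum N]
      with x h1x h2x
    simp only [h1x, Pi.smul_apply, h2x, birkhoffAverage]
  -- L¹ convergence of the Lp averages to P
  have hL1 : Filter.Tendsto
      (fun N => ∫ x, |((birkhoffAverage ℝ U _root_.id N G : Lp ℝ 2 μ) : X → ℝ) x - (P : X → ℝ) x| ∂μ)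
      Filter.atTop (𝓝 0) := by
    have hnorm : Filter.Tendsto (fun N => ‖birkhoffAverage ℝ U _root_.id N G - P‖)
        Filter.atTop (𝓝 0) := tendsto_iff_norm_sub_tendsto_zero.mp hconv
    refine squeeze_zero (fun N => integral_nonneg fun x => abs_nonneg _) (fun N => ?_) hnorm
    set D : Lp ℝ 2 μ := birkhoffAverage ℝ U _root_.id N G - P with hD
    have hcoe : ∀ᵐ x ∂μ, |((birkhoffAverage ℝ U _root_.id N G : Lp ℝ 2 μ) : X → ℝ) x - (P : X → ℝ) x|
        = ‖(D : X → ℝ) x‖ := by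
      filter_upwards [Lp.coeFn_sub (birkhoffAverage ℝ U _root_.id N G) P] with x hx
      rw [hx, Pi.sub_apply, Real.norm_eq_abs]
    rw [integral_congr_ae hcoe, integral_norm_eq_lintegral_enorm (Lp.aestronglyMeasurable D),
      ← eLpNorm_one_eq_lintegral_enorm, Lp.norm_def]
    refine ENNReal.toReal_mono (Lp.eLpNorm_ne_top D) ?_
    exact eLpNorm_le_eLpNorm_of_exponent_le one_le_two (Lp.aestronglyMeasurable D)
  -- identify P with the conditional expectation
  have hPcond : (P : X → ℝ) =ᵐ[μ] μ[g|invSigma S] := by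
    have hgint : Integrable g μ := hgm2.integrable one_le_two
    refine ae_eq_condExp_of_forall_setIntegral_eq hm hgint
      (fun s _ _ => ((Lp.memLp P).integrable one_le_two).integrableOn)
      (fun s hs hμs => ?_) ?_
    · -- set integral equality
      have hsmeas : MeasurableSet s := hm s hs
      have hsinv : S ⁻¹' s = s := hs.2
      have hsetAN : ∀ N : ℕ, 1 ≤ N →
          ∫ x in s, ((birkhoffAverage ℝ U _root_.id N G : Lp ℝ 2 μ) : X → ℝ) x ∂μ
            = ∫ x in s, g x ∂μ := by
        intro N hN
        rw [integral_congr_ae (Filter.EventuallyEq.restrict (hAN N))]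
        have hint : ∀ i : ℕ, IntegrableOn (fun x => g (S^[i] x)) s μ := by
          intro i
          refine Integrable.integrableOn ?_
          exact (MemLp.of_bound ((hg.comp (hS.measurable.iterate i)).aestronglyMeasurable) C
            (Filter.Eventually.of_forall fun x => by
              simpa [Real.norm_eq_abs] using hgb (S^[i] x))).integrable le_rfl
        have h1 : ∫ x in s, birkhoffAverage ℝ S g N x ∂μ
            = (N:ℝ)⁻¹ • ∑ i ∈ Finset.range N, ∫ x in s, g (S^[i] x) ∂μ := by
          rw [show (birkhoffAverage ℝ S g N) = fun x => (N:ℝ)⁻¹ • birkhoffSum S g N x from rfl]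
          rw [integral_smul]
          congr 1
          simp only [birkhoffSum]
          exact integral_finset_sum _ fun i _ => hint i
        rw [h1]
        have h2 : ∀ i ∈ Finset.range N, ∫ x in s, g (S^[i] x) ∂μ = ∫ x in s, g x ∂μ :=
          fun i _ => setIntegral_iterate_of_invariant hS hsmeas hsinv hg.aestronglyMeasurable i
        rw [Finset.sum_congr rfl h2, Finset.sum_const, Finset.card_range]
        have hN0 : (N:ℝ) ≠ 0 := by positivity
        rw [nsmul_eq_mul, smul_eq_mul, ← mul_assoc, inv_mul_cancel₀ hN0, one_mul]
      -- convergence of set integrals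
      have htend : Filter.Tendsto
          (fun N => ∫ x in s, ((birkhoffAverage ℝ U _root_.id N G : Lp ℝ 2 μ) : X → ℝ) x ∂μ)
          Filter.atTop (𝓝 (∫ x in s, (P : X → ℝ) x ∂μ)) := by
        rw [tendsto_iff_norm_sub_tendsto_zero]
        refine squeeze_zero (fun N => norm_nonneg _) (fun N => ?_) hL1
        have hintAN : Integrable (((birkhoffAverage ℝ U _root_.id N G : Lp ℝ 2 μ) : X → ℝ)) μ :=
          (Lp.memLp _).integrable one_le_two
        have hintP : Integrable ((P : X → ℝ)) μ := (Lp.memLp _).integrable one_le_two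
        rw [← integral_sub hintAN.integrableOn hintP.integrableOn]
        refine (norm_integral_le_integral_norm _).trans ?_
        refine (setIntegral_le_integral ((hintAN.sub hintP).abs) ?_).trans ?_
        · exact Filter.Eventually.of_forall fun x => abs_nonneg _
        · apply le_of_eq
          apply integral_congr_ae
          exact Filter.Eventually.of_forall fun x => by simp [Real.norm_eq_abs]
      have heq : Filter.Tendsto
          (fun N => ∫ x in s, ((birkhoffAverage ℝ U _root_.id N G : Lp ℝ 2 μ) : X → ℝ) x ∂μ)
          Filter.atTop (𝓝 (∫ x in s, g x ∂μ)) := by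
        refine Filter.Tendsto.congr' ?_ tendsto_const_nhds
        filter_upwards [Filter.eventually_ge_atTop 1] with N hN
        exact (hsetAN N hN).symm
      exact tendsto_nhds_unique htend heq
    · -- a.e. strong measurability w.r.t. invSigma
      refine aeStronglyMeasurable'_invSigma_of_ae_comp_eq hS (Lp.aestronglyMeasurable P) ?_
      have h1 : (U P : X → ℝ) =ᵐ[μ] (P : X → ℝ) ∘ S := hUapp P
      rw [hUfix] at h1
      exact h1.symm
  -- conclude
  have hfinal : (fun N => ∫ x, |birkhoffAverage ℝ S g N x - (μ[g|invSigma S]) x| ∂μ)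
      = fun N => ∫ x, |((birkhoffAverage ℝ U _root_.id N G : Lp ℝ 2 μ) : X → ℝ) x - (P : X → ℝ) x| ∂μ := by
    funext N
    apply integral_congr_ae
    filter_upwards [hAN N, hPcond] with x h1x h2x
    rw [h1x, h2x]
  rw [hfinal]
  exact hL1

end MET

section Pairing

variable {X : Type*} [MeasurableSpace X] {μ : Measure X} [IsProbabilityMeasure μ]

theorem sigmaFinite_trim_invSigma (S : X → X) :
    SigmaFinite (μ.trim (invSigma_le S (X := X))) := by
  have : IsFiniteMeasure (μ.trim (invSigma_le S (X := X))) := by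
    constructor
    rw [trim_measurableSet_eq _ MeasurableSet.univ]
    exact measure_lt_top μ _
  infer_instance

theorem met_pair {S : X → X} (hS : MeasurePreserving S μ μ) {g : X → ℝ} (hg : Measurable g)
    {C : ℝ} (hC : 0 ≤ C) (hgb : ∀ x, |g x| ≤ C)
    {Y : Type*} [MeasurableSpace Y] (κ : Measure Y) [IsFiniteMeasure κ]
    {q : Y → X} (hq : Measurable q) (hmap : κ.map q = μ)
    {F : Y → ℝ} (hF : Measurable F) {CF : ℝ} (hCF : 0 ≤ CF) (hFb : ∀ y, |F y| ≤ CF) :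
    Filter.Tendsto (fun N => ∫ y, F y * birkhoffAverage ℝ S g N (q y) ∂κ) Filter.atTop
      (𝓝 (∫ y, F y * (μ[g|invSigma S]) (q y) ∂κ)) := by
  have hmet := met_L1 hS hg hgb
  set p := μ[g|invSigma S] with hp
  have spm : StronglyMeasurable p := stronglyMeasurable_condExp.mono (invSigma_le S)
  have hpq_int : Integrable (fun y => p (q y)) κ := by
    have h1 : Integrable p (κ.map q) := by rw [hmap]; exact integrable_condExp
    exact (integrable_map_measure (by rw [hmap]; exact spm.aestronglyMeasurable)
      hq.aemeasurable).mp h1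
  have haN_meas : ∀ N, Measurable (birkhoffAverage ℝ S g N) :=
    measurable_birkhoffAverage hS.measurable hg
  have haN_int : ∀ N, Integrable (fun y => birkhoffAverage ℝ S g N (q y)) κ := by
    intro N
    refine (MemLp.of_bound (((haN_meas N).comp hq).aestronglyMeasurable) C
      (Filter.Eventually.of_forall fun y => ?_)).integrable le_rfl
    simpa [Real.norm_eq_abs] using abs_birkhoffAverage_le hC hgb N (q y)
  rw [tendsto_iff_norm_sub_tendsto_zero]
  have hbound : ∀ N, ‖(∫ y, F y * birkhoffAverage ℝ S g N (q y) ∂κ)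
      - ∫ y, F y * p (q y) ∂κ‖ ≤ CF * ∫ x, |birkhoffAverage ℝ S g N x - p x| ∂μ := by
    intro N
    have hFb' : ∀ y, ‖F y‖ ≤ CF := fun y => by simpa [Real.norm_eq_abs] using hFb y
    have hint1 : Integrable (fun y => F y * birkhoffAverage ℝ S g N (q y)) κ :=
      (haN_int N).bdd_mul hF.aestronglyMeasurable (Filter.Eventually.of_forall hFb')
    have hint2 : Integrable (fun y => F y * p (q y)) κ :=
      hpq_int.bdd_mul hF.aestronglyMeasurable (Filter.Eventually.of_forall hFb')
    rw [← integral_sub hint1 hint2]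
    refine (norm_integral_le_integral_norm _).trans ?_
    have hdiff_int : Integrable (fun y => |birkhoffAverage ℝ S g N (q y) - p (q y)|) κ :=
      ((haN_int N).sub hpq_int).abs
    have hstep : ∫ y, ‖F y * birkhoffAverage ℝ S g N (q y) - F y * p (q y)‖ ∂κ
        ≤ ∫ y, CF * |birkhoffAverage ℝ S g N (q y) - p (q y)| ∂κ := by
      refine integral_mono ((hint1.sub hint2).norm) (hdiff_int.const_mul CF) fun y => ?_
      rw [← mul_sub, Real.norm_eq_abs, abs_mul]
      exact mul_le_mul_of_nonneg_right (hFb y) (abs_nonneg _)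
    refine hstep.trans ?_
    rw [integral_const_mul]
    refine mul_le_mul_of_nonneg_left (le_of_eq ?_) hCF
    have hmeas2 : AEStronglyMeasurable (fun x => |birkhoffAverage ℝ S g N x - p x|) (κ.map q) := by
      rw [hmap]
      exact ((haN_meas N).sub spm.measurable).abs.aestronglyMeasurable
    calc ∫ y, |birkhoffAverage ℝ S g N (q y) - p (q y)| ∂κ
        = ∫ x, |birkhoffAverage ℝ S g N x - p x| ∂(κ.map q) :=
          (integral_map hq.aemeasurable hmeas2).symm
      _ = ∫ x, |birkhoffAverage ℝ S g N x - p x| ∂μ := by rw [hmap]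
  have hCFmet : Filter.Tendsto (fun N => CF * ∫ x, |birkhoffAverage ℝ S g N x - p x| ∂μ)
      Filter.atTop (𝓝 0) := by
    have := hmet.const_mul CF
    simpa using this
  exact squeeze_zero (fun N => norm_nonneg _) hbound hCFmet

/-- Pull-out property: pairing against a conditional expectation. -/
theorem integral_mul_condexp (S : X → X) {f g : X → ℝ} (hf : Measurable f) {C : ℝ}
    (hfb : ∀ x, |f x| ≤ C) (hg : Measurable g) {C' : ℝ} (hgb : ∀ x, |g x| ≤ C') :
    ∫ x, f x * (μ[g|invSigma S]) x ∂μ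
      = ∫ x, (μ[f|invSigma S]) x * (μ[g|invSigma S]) x ∂μ := by
  haveI := sigmaFinite_trim_invSigma (μ := μ) S
  have hm : invSigma S ≤ ‹MeasurableSpace X› := invSigma_le S
  have hfint : Integrable f μ :=
    (MemLp.of_bound hf.aestronglyMeasurable C (Filter.Eventually.of_forall fun x => by
      simpa [Real.norm_eq_abs] using hfb x)).integrable le_rfl
  have hGm : StronglyMeasurable[invSigma S] (μ[g|invSigma S]) := stronglyMeasurable_condExp
  have hint1 : Integrable (μ[g|invSigma S] * f) μ := by
    have h := integrable_condExp.bdd_mul (μ := μ) (g := μ[g|invSigma S])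
      hf.aestronglyMeasurable (Filter.Eventually.of_forall fun x => by simpa [Real.norm_eq_abs] using hfb x)
    exact h.congr (Filter.Eventually.of_forall fun x => mul_comm _ _)
  have key := condExp_mul_of_stronglyMeasurable_left hGm hint1 hfint
  calc ∫ x, f x * (μ[g|invSigma S]) x ∂μ
      = ∫ x, (μ[g|invSigma S] * f) x ∂μ :=
        integral_congr_ae (Filter.Eventually.of_forall fun x => (mul_comm _ _))
    _ = ∫ x, (μ[μ[g|invSigma S] * f|invSigma S]) x ∂μ := (integral_condExp hm).symm
    _ = ∫ x, ((μ[g|invSigma S]) * (μ[f|invSigma S])) x ∂μ := integral_congr_ae key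
    _ = ∫ x, (μ[f|invSigma S]) x * (μ[g|invSigma S]) x ∂μ :=
        integral_congr_ae (Filter.Eventually.of_forall fun x => (mul_comm _ _))

end Pairing

section CondexpComp

variable {X : Type*} [MeasurableSpace X] {μ : Measure X} [IsProbabilityMeasure μ]

theorem condexp_comp_self {S : X → X} (hS : MeasurePreserving S μ μ) {g : X → ℝ}
    (hg : Measurable g) {C : ℝ} (hgb : ∀ x, |g x| ≤ C) :
    μ[g ∘ S|invSigma S] =ᵐ[μ] μ[g|invSigma S] := by
  haveI := sigmaFinite_trim_invSigma (μ := μ) S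
  have hm : invSigma S ≤ ‹MeasurableSpace X› := invSigma_le S
  have hgint : Integrable g μ :=
    (MemLp.of_bound hg.aestronglyMeasurable C (Filter.Eventually.of_forall fun x => by
      simpa [Real.norm_eq_abs] using hgb x)).integrable le_rfl
  have hgSint : Integrable (g ∘ S) μ :=
    (MemLp.of_bound (hg.comp hS.measurable).aestronglyMeasurable C
      (Filter.Eventually.of_forall fun x => by
        simpa [Real.norm_eq_abs] using hgb (S x))).integrable le_rfl
  refine (ae_eq_condExp_of_forall_setIntegral_eq hm hgSint
    (fun s _ _ => integrable_condExp.integrableOn) (fun s hs hμs => ?_)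
    stronglyMeasurable_condExp.aestronglyMeasurable).symm
  rw [setIntegral_condExp hm hgint hs]
  exact (setIntegral_comp_of_invariant hS (hm s hs) hs.2 hg.aestronglyMeasurable).symm

theorem setIntegral_comp_equiv (R : X ≃ X) (hRmeas : Measurable ⇑R)
    (hR : MeasurePreserving ⇑R μ μ) {t : Set X} (ht : MeasurableSet t) {ψ : X → ℝ}
    (hψ : AEStronglyMeasurable ψ μ) :
    ∫ x in ⇑R ⁻¹' t, ψ (R x) ∂μ = ∫ x in t, ψ x ∂μ := by
  have h1 : μ.restrict t = Measure.map ⇑R (μ.restrict (⇑R ⁻¹' t)) := by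
    conv_lhs => rw [← hR.map_eq]
    rw [Measure.restrict_map hRmeas ht]
  have h2 : ∫ x in t, ψ x ∂μ = ∫ x, ψ x ∂(Measure.map ⇑R (μ.restrict (⇑R ⁻¹' t))) := by
    rw [← h1]
  rw [h2, integral_map hRmeas.aemeasurable (by rw [← h1]; exact hψ.restrict)]

theorem condexp_comp_commuting {S : X → X} (hS : MeasurePreserving S μ μ) (R : X ≃ X)
    (hRmeas : Measurable ⇑R) (hRmeas' : Measurable ⇑R.symm) (hR : MeasurePreserving ⇑R μ μ)
    (hcomm : ∀ x, R (S x) = S (R x)) {g : X → ℝ} (hg : Measurable g) {C : ℝ}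
    (hgb : ∀ x, |g x| ≤ C) :
    μ[g ∘ ⇑R|invSigma S] =ᵐ[μ] (μ[g|invSigma S]) ∘ ⇑R := by
  haveI := sigmaFinite_trim_invSigma (μ := μ) S
  have hm : invSigma S ≤ ‹MeasurableSpace X› := invSigma_le S
  have hcomm' : ∀ x, R.symm (S x) = S (R.symm x) := by
    intro x
    have h1 : R (S (R.symm x)) = S (R (R.symm x)) := hcomm (R.symm x)
    rw [R.apply_symm_apply] at h1
    rw [← h1, R.symm_apply_apply]
  have hgint : Integrable g μ :=
    (MemLp.of_bound hg.aestronglyMeasurable C (Filter.Eventually.of_forall fun x => by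
      simpa [Real.norm_eq_abs] using hgb x)).integrable le_rfl
  have hgRint : Integrable (g ∘ ⇑R) μ :=
    (MemLp.of_bound (hg.comp hRmeas).aestronglyMeasurable C
      (Filter.Eventually.of_forall fun x => by
        simpa [Real.norm_eq_abs] using hgb (R x))).integrable le_rfl
  have hRm : @Measurable X X (invSigma S) (invSigma S) ⇑R := by
    intro A hA
    refine ⟨hRmeas hA.1, ?_⟩
    have : S ⁻¹' (⇑R ⁻¹' A) = ⇑R ⁻¹' (S ⁻¹' A) := by
      ext x
      simp only [Set.mem_preimage, hcomm x]
    rw [this, hA.2]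
  have hsm : StronglyMeasurable[invSigma S] ((μ[g|invSigma S]) ∘ ⇑R) :=
    stronglyMeasurable_condExp.comp_measurable hRm
  have hcond_int : Integrable ((μ[g|invSigma S]) ∘ ⇑R) μ := by
    have h1 : Integrable (μ[g|invSigma S]) (μ.map ⇑R) := by
      rw [hR.map_eq]; exact integrable_condExp
    have haesm : AEStronglyMeasurable (μ[g|invSigma S]) (μ.map ⇑R) := by
      rw [hR.map_eq]
      exact (stronglyMeasurable_condExp.mono hm).aestronglyMeasurable
    exact (integrable_map_measure haesm hRmeas.aemeasurable).mp h1
  refine (ae_eq_condExp_of_forall_setIntegral_eq hm hgRint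
    (fun s _ _ => hcond_int.integrableOn) (fun s hs hμs => ?_)
    hsm.aestronglyMeasurable).symm
  -- t := R.symm ⁻¹' s satisfies R ⁻¹' t = s and t ∈ invSigma S
  set t : Set X := ⇑R.symm ⁻¹' s with htdef
  have hts : ⇑R ⁻¹' t = s := by
    ext x; simp [htdef, R.symm_apply_apply]
  have htmeas : MeasurableSet t := hRmeas' (hm s hs)
  have htinv : MeasurableSet[invSigma S] t := by
    refine ⟨htmeas, ?_⟩
    have : S ⁻¹' (⇑R.symm ⁻¹' s) = ⇑R.symm ⁻¹' (S ⁻¹' s) := by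
      ext x
      simp only [Set.mem_preimage, hcomm' x]
    rw [htdef, this, hs.2]
  calc ∫ x in s, ((μ[g|invSigma S]) ∘ ⇑R) x ∂μ
      = ∫ x in ⇑R ⁻¹' t, (μ[g|invSigma S]) (R x) ∂μ := by rw [hts]; rfl
    _ = ∫ x in t, (μ[g|invSigma S]) x ∂μ :=
        setIntegral_comp_equiv R hRmeas hR htmeas
          (stronglyMeasurable_condExp.mono hm).aestronglyMeasurable
    _ = ∫ x in t, g x ∂μ := setIntegral_condExp hm hgint htinv
    _ = ∫ x in ⇑R ⁻¹' t, g (R x) ∂μ :=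
        (setIntegral_comp_equiv R hRmeas hR htmeas hg.aestronglyMeasurable).symm
    _ = ∫ x in s, (g ∘ ⇑R) x ∂μ := by rw [hts]; rfl

theorem condexp_invSigma_eq_comap {W : Type*} [MeasurableSpace W] {S : X → X} {πW : X → W}
    (hπ : Measurable πW) (hπS : ∀ x, πW (S x) = πW x)
    (hfactor : ∀ A : Set X, MeasurableSet[invSigma S] A →
      ∃ B : Set W, MeasurableSet B ∧ μ (A ∆ (πW ⁻¹' B)) = 0)
    {g : X → ℝ} (hgint : Integrable g μ) :
    μ[g|invSigma S] =ᵐ[μ] μ[g|MeasurableSpace.comap πW ‹_›] := by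
  haveI := sigmaFinite_trim_invSigma (μ := μ) S
  have hm : invSigma S ≤ ‹MeasurableSpace X› := invSigma_le S
  have hm' : MeasurableSpace.comap πW ‹_› ≤ invSigma S := by
    rintro s ⟨B, hB, rfl⟩
    refine ⟨hπ hB, ?_⟩
    ext x
    simp only [Set.mem_preimage, hπS x]
  have hm'0 : MeasurableSpace.comap πW ‹_› ≤ ‹MeasurableSpace X› := hm'.trans hm
  haveI : SigmaFinite (μ.trim hm'0) := by
    have : IsFiniteMeasure (μ.trim hm'0) := by
      constructor
      rw [trim_measurableSet_eq _ MeasurableSet.univ]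
      exact measure_lt_top μ _
    infer_instance
  refine (ae_eq_condExp_of_forall_setIntegral_eq hm hgint
    (fun s _ _ => integrable_condExp.integrableOn) (fun s hs hμs => ?_)
    ((stronglyMeasurable_condExp (m := MeasurableSpace.comap πW ‹_›)).mono
      hm').aestronglyMeasurable).symm
  obtain ⟨B, hB, hB0⟩ := hfactor s hs
  have hseq : s =ᵐ[μ] (πW ⁻¹' B : Set X) := by
    rw [MeasureTheory.ae_eq_set]
    constructor
    · exact measure_mono_null (by rw [Set.symmDiff_def] at hB0 ⊢; exact Set.subset_union_left) hB0
    · exact measure_mono_null (by rw [Set.symmDiff_def] at hB0 ⊢; exact Set.subset_union_right) hB0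
  have hBm' : MeasurableSet[MeasurableSpace.comap πW ‹_›] (πW ⁻¹' B) := ⟨B, hB, rfl⟩
  calc ∫ x in s, (μ[g|MeasurableSpace.comap πW ‹_›]) x ∂μ
      = ∫ x in πW ⁻¹' B, (μ[g|MeasurableSpace.comap πW ‹_›]) x ∂μ :=
        setIntegral_congr_set hseq
    _ = ∫ x in πW ⁻¹' B, g x ∂μ := setIntegral_condExp hm'0 hgint hBm'
    _ = ∫ x in s, g x ∂μ := (setIntegral_congr_set hseq).symm

theorem exists_factor_of_measurable_comap {W : Type*} [MeasurableSpace W] {πW : X → W}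
    (hπsurj : Function.Surjective πW) {f : X → ℝ}
    (hf : Measurable[MeasurableSpace.comap πW ‹_›] f) :
    ∃ h : W → ℝ, Measurable h ∧ f = h ∘ πW := by
  choose σ hσ using hπsurj
  have hconst : ∀ x y, πW x = πW y → f x = f y := by
    intro x y hxy
    obtain ⟨B, hB, hBe⟩ := hf (measurableSet_singleton (f x))
    have hx : x ∈ πW ⁻¹' B := by rw [hBe]; exact rfl
    have hy : y ∈ πW ⁻¹' B := by
      simp only [Set.mem_preimage] at hx ⊢
      rw [← hxy]; exact hx
    rw [hBe] at hy
    exact hy.symm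
  refine ⟨f ∘ σ, ?_, ?_⟩
  · intro c hc
    obtain ⟨B, hB, hBe⟩ := hf hc
    have : (f ∘ σ) ⁻¹' c = B := by
      ext w
      constructor
      · intro hw
        have : σ w ∈ πW ⁻¹' B := by rw [hBe]; exact hw
        simpa [hσ w] using this
      · intro hw
        have : σ w ∈ πW ⁻¹' B := by simpa [hσ w] using hw
        rw [hBe] at this
        exact this
    rw [this]
    exact hB
  · funext x
    exact hconst x (σ (πW x)) (hσ (πW x)).symm

end CondexpComp

section Helpers

variable {X : Type*} [MeasurableSpace X] {μ : Measure X} [IsProbabilityMeasure μ]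

/-- Generalization of `condexp_comp_self` to any measure-preserving map fixing the
invariant sets. -/
theorem condexp_comp_fixing {S R : X → X} (hR : MeasurePreserving R μ μ)
    (hfix : ∀ s : Set X, MeasurableSet[invSigma S] s → R ⁻¹' s = s) {g : X → ℝ}
    (hg : Measurable g) {C : ℝ} (hgb : ∀ x, |g x| ≤ C) :
    μ[g ∘ R|invSigma S] =ᵐ[μ] μ[g|invSigma S] := by
  haveI := sigmaFinite_trim_invSigma (μ := μ) S
  have hm : invSigma S ≤ ‹MeasurableSpace X› := invSigma_le S
  have hgint : Integrable g μ :=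
    (MemLp.of_bound hg.aestronglyMeasurable C (Filter.Eventually.of_forall fun x => by
      simpa [Real.norm_eq_abs] using hgb x)).integrable le_rfl
  have hgRint : Integrable (g ∘ R) μ :=
    (MemLp.of_bound (hg.comp hR.measurable).aestronglyMeasurable C
      (Filter.Eventually.of_forall fun x => by
        simpa [Real.norm_eq_abs] using hgb (R x))).integrable le_rfl
  refine (ae_eq_condExp_of_forall_setIntegral_eq hm hgRint
    (fun s _ _ => integrable_condExp.integrableOn) (fun s hs hμs => ?_)
    stronglyMeasurable_condExp.aestronglyMeasurable).symm
  rw [setIntegral_condExp hm hgint hs]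
  exact (setIntegral_comp_of_invariant hR (hm s hs) (hfix s hs) hg.aestronglyMeasurable).symm

end Helpers

section Ind

variable {Z : Type*} [MeasurableSpace Z]

/-- Real indicator function. -/
noncomputable def ind (A : Set Z) : Z → ℝ := A.indicator fun _ => 1

theorem ind_measurable {A : Set Z} (hA : MeasurableSet A) : Measurable (ind A) :=
  measurable_const.indicator hA

theorem ind_abs_le (A : Set Z) (x : Z) : |ind A x| ≤ 1 := by
  by_cases h : x ∈ A <;> simp [ind, Set.indicator_apply, h]

theorem ind_nonneg (A : Set Z) (x : Z) : 0 ≤ ind A x := by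
  by_cases h : x ∈ A <;> simp [ind, Set.indicator_apply, h]

theorem ind_comp {Y : Type*} (A : Set Z) (f : Y → Z) :
    (fun y => ind A (f y)) = ind (f ⁻¹' A) := by
  funext y
  by_cases h : f y ∈ A <;> simp [ind, Set.indicator_apply, h]

theorem ind_mul_ind {Y : Type*} (A : Set Z) (B : Set Y) (p : Z × Y) :
    ind A p.1 * ind B p.2 = ind (A ×ˢ B) p := by
  by_cases h1 : p.1 ∈ A <;> by_cases h2 : p.2 ∈ B <;>
    simp [ind, Set.indicator_apply, h1, h2, Set.mem_prod]

theorem integral_ind {μ : Measure Z} {A : Set Z} (hA : MeasurableSet A) :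
    ∫ x, ind A x ∂μ = (μ A).toReal := by
  rw [ind, integral_indicator_const (1:ℝ) hA, smul_eq_mul, mul_one]; rfl

/-- Two probability measures on a product space agreeing on measurable rectangles agree. -/
theorem prob_ext_prod {Y : Type*} [MeasurableSpace Y] {m1 m2 : Measure (Z × Y)}
    [IsProbabilityMeasure m1] [IsProbabilityMeasure m2]
    (h : ∀ A B, MeasurableSet A → MeasurableSet B → m1 (A ×ˢ B) = m2 (A ×ˢ B)) :
    m1 = m2 := by
  refine ext_of_generate_finite _ generateFrom_prod.symm isPiSystem_prod ?_ ?_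
  · rintro s ⟨A, hA, B, hB, rfl⟩
    exact h A B hA hB
  · simp [measure_univ]

end Ind

end PCUE


open PCUE in
/-- if the strictly ergodic system `(X,S,T)` admits a topological factor map
onto a strictly ergodic system `(W,τ)` (on which `S` acts trivially and `T` acts as `τ`)
realizing the measurable factor associated with `I_S`, then `(Q_S(X), G_S)` is uniquely
ergodic with unique invariant measure `μ_S`. -/
theorem pairCube_uniquely_ergodic
    {X : Type*} [MetricSpace X] [CompactSpace X] [MeasurableSpace X] [BorelSpace X]
    {W : Type*} [MetricSpace W] [CompactSpace W] [MeasurableSpace W] [BorelSpace W]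
    (S T : X ≃ₜ X) (hcomm : ∀ x, S (T x) = T (S x))
    (μ : Measure X) [IsProbabilityMeasure μ]
    -- (X,S,T) is strictly ergodic with unique invariant measure μ
    (hmin : ∀ x y : X, y ∈ closure {z | ∃ i j : ℤ, z = (S.toEquiv ^ i) ((T.toEquiv ^ j) x)})
    (hSinv : MeasurePreserving ⇑S μ μ) (hTinv : MeasurePreserving ⇑T μ μ)
    (huniq : ∀ ν : Measure X, IsProbabilityMeasure ν → MeasurePreserving ⇑S ν ν →
      MeasurePreserving ⇑T ν ν → ν = μ)
    -- (W,τ) is strictly ergodic with unique invariant measure ρW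
    (τ : W ≃ₜ W) (ρW : Measure W) [IsProbabilityMeasure ρW]
    (hWmin : ∀ w w' : W, w' ∈ closure {z | ∃ j : ℤ, z = (τ.toEquiv ^ j) w})
    (hτinv : MeasurePreserving ⇑τ ρW ρW)
    (hWuniq : ∀ ν : Measure W, IsProbabilityMeasure ν → MeasurePreserving ⇑τ ν ν → ν = ρW)
    -- πW is a topological factor map on which S acts trivially and T acts as τ
    (πW : X → W) (hπcont : Continuous πW) (hπsurj : Function.Surjective πW)
    (hπS : ∀ x, πW (S x) = πW x) (hπT : ∀ x, πW (T x) = τ (πW x))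
    -- πW realizes the measurable factor of (X,μ,S,T) associated with I_S
    (hfactor : ∀ A : Set X, MeasurableSet[invSigma ⇑S] A →
      ∃ B : Set W, MeasurableSet B ∧ μ (A ∆ (πW ⁻¹' B)) = 0)
    -- μ_S is the relatively independent self-joining of μ over I_S
    (μS : Measure (X × X)) (hμS : IsRelIndJoining μ ⇑S μS) :
    -- (Q_S(X), G_S) is uniquely ergodic with unique invariant measure μ_S
    IsProbabilityMeasure μS ∧ μS (pairQ S)ᶜ = 0 ∧
    (∀ g ∈ GS S.toEquiv T.toEquiv, ∀ s : Set (X × X),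
      MeasurableSet s → μS (⇑g ⁻¹' s) = μS s) ∧
    (∀ ν : Measure (X × X), IsProbabilityMeasure ν → ν (pairQ S)ᶜ = 0 →
      (∀ g ∈ GS S.toEquiv T.toEquiv, ∀ s : Set (X × X),
        MeasurableSet s → ν (⇑g ⁻¹' s) = ν s) →
      ν = μS) := by
  
  haveI := PCUE.sigmaFinite_trim_invSigma (μ := μ) ⇑S
  have hm : invSigma ⇑S ≤ ‹MeasurableSpace X› := PCUE.invSigma_le ⇑S
  have hSmeas : Measurable ⇑S := S.continuous.measurable
  have hTmeas : Measurable ⇑T := T.continuous.measurable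
  -- powers of S
  have hpow : ∀ (i : ℕ) (x : X), (S.toEquiv ^ (i:ℤ)) x = (⇑S)^[i] x := by
    intro i x
    rw [zpow_natCast, ← Equiv.Perm.iterate_eq_pow]
    rfl
  have hmemQ : ∀ (i : ℕ) (x : X), (x, (⇑S)^[i] x) ∈ pairQ S := by
    intro i x
    exact subset_closure ⟨x, (i:ℤ), by rw [hpow i x]⟩
  -- Part 1 : μS is a probability measure
  have huniv : (μS Set.univ).toReal = 1 := by
    have h11 := hμS (fun _ => 1) (fun _ => 1) measurable_const measurable_const
      ⟨1, fun x => by simp⟩ ⟨1, fun x => by simp⟩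
    have hre : (μ[(fun _ => (1:ℝ))|invSigma ⇑S]) = fun _ => 1 := condExp_const hm 1
    rw [hre] at h11
    simp only [one_mul] at h11
    rw [integral_const, integral_const] at h11
    exact (by simpa [measure_univ] using h11 : μS.real Set.univ = 1)
  haveI hProbS : IsProbabilityMeasure μS := ⟨(ENNReal.toReal_eq_one_iff _).mp huniv⟩
  -- rectangle formula
  have hrect : ∀ A B : Set X, MeasurableSet A → MeasurableSet B →
      (μS (A ×ˢ B)).toReal
        = ∫ x, (μ[ind A|invSigma ⇑S]) x * (μ[ind B|invSigma ⇑S]) x ∂μ := by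
    intro A B hA hB
    have h := hμS (ind A) (ind B) (ind_measurable hA) (ind_measurable hB)
      ⟨1, ind_abs_le A⟩ ⟨1, ind_abs_le B⟩
    rw [← h]
    have h2 : ∀ p : X × X, ind A p.1 * ind B p.2 = ind (A ×ˢ B) p := ind_mul_ind A B
    rw [integral_congr_ae (Filter.Eventually.of_forall h2), integral_ind (hA.prod hB)]
  -- Part 2 : μS is supported on pairQ S
  have hzero_rect : ∀ U V : Set X, IsOpen U → IsOpen V → (U ×ˢ V) ∩ pairQ S = ∅ →
      μS (U ×ˢ V) = 0 := by
    intro U V hU hV hdisj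
    have hUm := hU.measurableSet
    have hVm := hV.measurableSet
    have htend := PCUE.met_pair hSinv (ind_measurable hVm) zero_le_one (ind_abs_le V)
      μ measurable_id Measure.map_id (ind_measurable hUm) zero_le_one (ind_abs_le U)
    have hconst : ∀ N, ∫ y, ind U y * birkhoffAverage ℝ ⇑S (ind V) N (id y) ∂μ = 0 := by
      intro N
      have hzero : ∀ y, ind U y * birkhoffAverage ℝ ⇑S (ind V) N (id y) = 0 := by
        intro y
        have hterm : ∀ i ∈ Finset.range N, ind U y * ind V ((⇑S)^[i] y) = 0 := by
          intro i _
          by_cases hy : y ∈ U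
          · by_cases hz : (⇑S)^[i] y ∈ V
            · exact absurd (Set.mem_inter (Set.mk_mem_prod hy hz) (hmemQ i y))
                (by rw [hdisj]; exact Set.notMem_empty _)
            · simp [ind, Set.indicator_of_notMem hz]
          · simp [ind, Set.indicator_of_notMem hy]
        show ind U y * ((N:ℝ)⁻¹ • ∑ i ∈ Finset.range N, ind V ((⇑S)^[i] y)) = 0
        rw [smul_eq_mul, mul_left_comm, Finset.mul_sum]
        rw [Finset.sum_eq_zero hterm, mul_zero]
      rw [show (fun y => ind U y * birkhoffAverage ℝ ⇑S (ind V) N (id y)) = fun _ => (0:ℝ)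
        from funext hzero]
      simp
    have h0 : ∫ y, ind U y * (μ[ind V|invSigma ⇑S]) (id y) ∂μ = 0 := by
      refine tendsto_nhds_unique htend ?_
      simp only [hconst]
      exact tendsto_const_nhds
    have hfin : (μS (U ×ˢ V)).toReal = 0 := by
      rw [hrect U V hUm hVm, ← PCUE.integral_mul_condexp ⇑S (ind_measurable hUm)
        (ind_abs_le U) (ind_measurable hVm) (ind_abs_le V)]
      simpa using h0
    rcases (ENNReal.toReal_eq_zero_iff _).mp hfin with h | h
    · exact h
    · exact absurd h (measure_ne_top μS _)
  have hsupp : μS (pairQ S)ᶜ = 0 := by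
    have hopen : IsOpen (pairQ S)ᶜ := isClosed_closure.isOpen_compl
    have hbasis := (TopologicalSpace.isBasis_countableBasis X).prod
      (TopologicalSpace.isBasis_countableBasis X)
    obtain ⟨Sfam, hSsub, hSeq⟩ := hbasis.open_eq_sUnion hopen
    have hcount : Sfam.Countable :=
      ((TopologicalSpace.countable_countableBasis X).image2
        (TopologicalSpace.countable_countableBasis X) _).mono hSsub
    rw [hSeq, Set.sUnion_eq_biUnion]
    refine (measure_biUnion_null_iff hcount).mpr ?_
    intro b hb
    obtain ⟨U, hU, V, hV, rfl⟩ := hSsub hb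
    have hbsub : U ×ˢ V ⊆ (pairQ S)ᶜ := by
      rw [hSeq]
      exact Set.subset_sUnion_of_mem hb
    refine hzero_rect U V (TopologicalSpace.isOpen_of_mem_countableBasis hU)
      (TopologicalSpace.isOpen_of_mem_countableBasis hV) ?_
    exact Set.eq_empty_of_forall_notMem fun p hp => (hbsub hp.1) hp.2
  -- Part 3 : invariance under G_S
  have mp_symm : ∀ (e : X ≃ X), Measurable ⇑e → Measurable ⇑e.symm →
      MeasurePreserving ⇑e μ μ → MeasurePreserving ⇑e.symm μ μ := by
    intro e hme hme' h
    refine ⟨hme', ?_⟩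
    conv_lhs => rw [← h.map_eq]
    rw [Measure.map_map hme' hme]
    have hid : ⇑e.symm ∘ ⇑e = id := by funext x; simp
    rw [hid, Measure.map_id]
  have comm_symm : ∀ (e : X ≃ X), (∀ x, e (S x) = S (e x)) → ∀ x, e.symm (S x) = S (e.symm x) := by
    intro e he x
    have h1 : e (S (e.symm x)) = S (e (e.symm x)) := he (e.symm x)
    rw [e.apply_symm_apply] at h1
    rw [← h1, e.symm_apply_apply]
  have Hfacts : ∀ g ∈ Subgroup.closure {S.toEquiv, T.toEquiv},
      Continuous ⇑g ∧ Continuous ⇑g⁻¹ ∧ MeasurePreserving ⇑g μ μ ∧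
        MeasurePreserving ⇑g⁻¹ μ μ ∧ (∀ x, g (S x) = S (g x)) ∧
        (∀ x, g⁻¹ (S x) = S (g⁻¹ x)) := by
    intro g hg
    refine Subgroup.closure_induction ?_ ?_ ?_ ?_ hg
    · intro x hx
      rcases hx with rfl | hx
      · exact ⟨S.continuous, S.symm.continuous, hSinv,
          mp_symm S.toEquiv S.continuous.measurable S.symm.continuous.measurable hSinv,
          fun x => rfl, comm_symm S.toEquiv fun x => rfl⟩
      · rcases hx with rfl
        exact ⟨T.continuous, T.symm.continuous, hTinv,
          mp_symm T.toEquiv T.continuous.measurable T.symm.continuous.measurable hTinv,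
          fun x => (hcomm x).symm, comm_symm T.toEquiv fun x => (hcomm x).symm⟩
    · refine ⟨continuous_id, ?_, MeasurePreserving.id μ, ?_, fun x => rfl, ?_⟩
      · rw [inv_one]; exact continuous_id
      · rw [inv_one]; exact MeasurePreserving.id μ
      · rw [inv_one]; exact fun x => rfl
    · intro x y hx hy ihx ihy
      obtain ⟨c1, c1', m1, m1', k1, k1'⟩ := ihx
      obtain ⟨c2, c2', m2, m2', k2, k2'⟩ := ihy
      have hco : ⇑(x * y) = ⇑x ∘ ⇑y := rfl
      have hco' : ⇑(x * y)⁻¹ = ⇑y⁻¹ ∘ ⇑x⁻¹ := by rw [mul_inv_rev]; rfl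
      refine ⟨by rw [hco]; exact c1.comp c2, by rw [hco']; exact c2'.comp c1', ?_, ?_, ?_, ?_⟩
      · have := m1.comp m2
        rw [← hco] at this
        exact this
      · have := m2'.comp m1'
        rw [← hco'] at this
        exact this
      · intro z
        show x (y (S z)) = S (x (y z))
        rw [k2 z, k1 (y z)]
      · intro z
        rw [mul_inv_rev]
        show y⁻¹ (x⁻¹ (S z)) = S (y⁻¹ (x⁻¹ z))
        rw [k1' z, k2' (x⁻¹ z)]
    · intro x hx ih
      obtain ⟨c1, c1', m1, m1', k1, k1'⟩ := ih
      refine ⟨c1', ?_, m1', ?_, k1', ?_⟩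
      · rw [inv_inv]; exact c1
      · rw [inv_inv]; exact m1
      · rw [inv_inv]; exact k1
  have hmap_eq : ∀ f : X × X → X × X, Measurable f →
      (∀ A B : Set X, MeasurableSet A → MeasurableSet B →
        μS (f ⁻¹' (A ×ˢ B)) = μS (A ×ˢ B)) →
      Measure.map f μS = μS := by
    intro f hf hAB
    haveI := Measure.isProbabilityMeasure_map (μ := μS) hf.aemeasurable
    refine PCUE.prob_ext_prod fun A B hA hB => ?_
    rw [Measure.map_apply hf (hA.prod hB)]
    exact hAB A B hA hB
  have hindc : ∀ (B : Set X) (f : X → X), ind (f ⁻¹' B) = ind B ∘ f := by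
    intro B f
    funext y
    exact (congrFun (ind_comp B f) y).symm
  have hsideRect : ∀ R : X ≃ X, Measurable ⇑R → MeasurePreserving ⇑R μ μ →
      (∀ s : Set X, MeasurableSet[invSigma ⇑S] s → ⇑R ⁻¹' s = s) →
      ∀ A B : Set X, MeasurableSet A → MeasurableSet B →
        μS ((fun p : X × X => (p.1, R p.2)) ⁻¹' (A ×ˢ B)) = μS (A ×ˢ B) := by
    intro R hRmeas hRmp hRfix A B hA hB
    have hpre : (fun p : X × X => (p.1, R p.2)) ⁻¹' (A ×ˢ B) = A ×ˢ (⇑R ⁻¹' B) := by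
      ext p; simp [Set.mem_prod]
    rw [hpre]
    refine (ENNReal.toReal_eq_toReal_iff' (measure_ne_top _ _) (measure_ne_top _ _)).mp ?_
    rw [hrect A _ hA (hRmeas hB), hrect A B hA hB, hindc B ⇑R]
    have hcomp := PCUE.condexp_comp_fixing (μ := μ) (S := ⇑S) hRmp hRfix
      (ind_measurable hB) (ind_abs_le B)
    refine integral_congr_ae ?_
    filter_upwards [hcomp] with x hx
    rw [hx]
  have hdiagRect : ∀ R : X ≃ X, Measurable ⇑R → Measurable ⇑R.symm →
      MeasurePreserving ⇑R μ μ → (∀ x, R (S x) = S (R x)) →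
      ∀ A B : Set X, MeasurableSet A → MeasurableSet B →
        μS ((fun p : X × X => (R p.1, R p.2)) ⁻¹' (A ×ˢ B)) = μS (A ×ˢ B) := by
    intro R hRmeas hRmeas' hRmp hRcomm A B hA hB
    have hpre : (fun p : X × X => (R p.1, R p.2)) ⁻¹' (A ×ˢ B)
        = (⇑R ⁻¹' A) ×ˢ (⇑R ⁻¹' B) := by
      ext p; simp [Set.mem_prod]
    rw [hpre]
    refine (ENNReal.toReal_eq_toReal_iff' (measure_ne_top _ _) (measure_ne_top _ _)).mp ?_
    rw [hrect _ _ (hRmeas hA) (hRmeas hB), hrect A B hA hB, hindc A ⇑R, hindc B ⇑R]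
    have hcompA := PCUE.condexp_comp_commuting (μ := μ) hSinv R hRmeas hRmeas' hRmp hRcomm
      (ind_measurable hA) (ind_abs_le A)
    have hcompB := PCUE.condexp_comp_commuting (μ := μ) hSinv R hRmeas hRmeas' hRmp hRcomm
      (ind_measurable hB) (ind_abs_le B)
    have hmm : AEStronglyMeasurable
        (fun x => (μ[ind A|invSigma ⇑S]) x * (μ[ind B|invSigma ⇑S]) x) (Measure.map ⇑R μ) := by
      rw [hRmp.map_eq]
      exact ((stronglyMeasurable_condExp.mono hm).mul
        (stronglyMeasurable_condExp.mono hm)).aestronglyMeasurable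
    calc ∫ x, (μ[ind A ∘ ⇑R|invSigma ⇑S]) x * (μ[ind B ∘ ⇑R|invSigma ⇑S]) x ∂μ
        = ∫ x, (μ[ind A|invSigma ⇑S]) (R x) * (μ[ind B|invSigma ⇑S]) (R x) ∂μ := by
          refine integral_congr_ae ?_
          filter_upwards [hcompA, hcompB] with x h1 h2
          rw [h1, h2]
          rfl
      _ = ∫ y, (μ[ind A|invSigma ⇑S]) y * (μ[ind B|invSigma ⇑S]) y ∂(Measure.map ⇑R μ) :=
          (integral_map hRmeas.aemeasurable hmm).symm
      _ = ∫ x, (μ[ind A|invSigma ⇑S]) x * (μ[ind B|invSigma ⇑S]) x ∂μ := by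
          rw [hRmp.map_eq]
  have hP : ∀ g ∈ GS S.toEquiv T.toEquiv, Measurable ⇑g ∧ Measurable ⇑g⁻¹ ∧
      Measure.map ⇑g μS = μS ∧ Measure.map ⇑g⁻¹ μS = μS := by
    intro g hg
    refine Subgroup.closure_induction ?_ ?_ ?_ ?_ hg
    · rintro x (rfl | ⟨g0, hg0, rfl⟩)
      · -- side2 S
        have hc1 : ⇑(side2 S.toEquiv) = fun p : X × X => (p.1, S p.2) := rfl
        have hc2 : ⇑(side2 S.toEquiv)⁻¹ = fun p : X × X => (p.1, S.symm p.2) := rfl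
        have hmeas1 : Measurable ⇑(side2 S.toEquiv) := by
          rw [hc1]; exact measurable_fst.prodMk (hSmeas.comp measurable_snd)
        have hmeas2 : Measurable ⇑(side2 S.toEquiv)⁻¹ := by
          rw [hc2]
          exact measurable_fst.prodMk (S.symm.continuous.measurable.comp measurable_snd)
        have hfix1 : ∀ s : Set X, MeasurableSet[invSigma ⇑S] s → ⇑S.toEquiv ⁻¹' s = s :=
          fun s hs => hs.2
        have hfix2 : ∀ s : Set X, MeasurableSet[invSigma ⇑S] s → ⇑S.toEquiv.symm ⁻¹' s = s := by
          intro s hs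
          have h1 : ⇑S.toEquiv.symm ⁻¹' s = ⇑S.toEquiv '' s := (Equiv.image_eq_preimage_symm _ _).symm
          rw [h1]
          conv_lhs => rw [← hs.2]
          exact Equiv.image_preimage _ _
        refine ⟨hmeas1, hmeas2, ?_, ?_⟩
        · refine hmap_eq _ hmeas1 ?_
          rw [hc1]
          exact hsideRect S.toEquiv hSmeas hSinv hfix1
        · refine hmap_eq _ hmeas2 ?_
          rw [hc2]
          exact hsideRect S.toEquiv.symm S.symm.continuous.measurable
            (mp_symm S.toEquiv hSmeas S.symm.continuous.measurable hSinv) hfix2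
      · -- diag2 g0
        obtain ⟨c1, c1', m1, m1', k1, k1'⟩ := Hfacts g0 hg0
        have hc1 : ⇑(diag2 g0) = fun p : X × X => (g0 p.1, g0 p.2) := rfl
        have hc2 : ⇑(diag2 g0)⁻¹ = fun p : X × X => (g0⁻¹ p.1, g0⁻¹ p.2) := rfl
        have hmeas1 : Measurable ⇑(diag2 g0) := by
          rw [hc1]
          exact (c1.measurable.comp measurable_fst).prodMk (c1.measurable.comp measurable_snd)
        have hmeas2 : Measurable ⇑(diag2 g0)⁻¹ := by
          rw [hc2]
          exact (c1'.measurable.comp measurable_fst).prodMk (c1'.measurable.comp measurable_snd)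
        refine ⟨hmeas1, hmeas2, ?_, ?_⟩
        · refine hmap_eq _ hmeas1 ?_
          rw [hc1]
          exact hdiagRect (g0 : X ≃ X) c1.measurable c1'.measurable m1 k1
        · refine hmap_eq _ hmeas2 ?_
          rw [hc2]
          refine hdiagRect (g0⁻¹ : X ≃ X) c1'.measurable ?_ m1' k1'
          have hss : (g0⁻¹ : Equiv.Perm X).symm = g0 := by
            rw [Equiv.Perm.inv_def, Equiv.symm_symm]
          rw [hss]
          exact c1.measurable
    · refine ⟨measurable_id, ?_, ?_, ?_⟩
      · rw [inv_one]; exact measurable_id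
      · exact Measure.map_id
      · rw [inv_one]; exact Measure.map_id
    · intro x y hx hy ihx ihy
      obtain ⟨q1, q1', e1, e1'⟩ := ihx
      obtain ⟨q2, q2', e2, e2'⟩ := ihy
      have hco : ⇑(x * y) = ⇑x ∘ ⇑y := rfl
      have hco' : ⇑(x * y)⁻¹ = ⇑y⁻¹ ∘ ⇑x⁻¹ := by rw [mul_inv_rev]; rfl
      refine ⟨by rw [hco]; exact q1.comp q2, by rw [hco']; exact q2'.comp q1', ?_, ?_⟩
      · rw [hco, ← Measure.map_map q1 q2, e2, e1]
      · rw [hco', ← Measure.map_map q2' q1', e1', e2']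
    · intro x hx ih
      obtain ⟨q1, q1', e1, e1'⟩ := ih
      refine ⟨q1', ?_, e1', ?_⟩
      · rw [inv_inv]; exact q1
      · rw [inv_inv]; exact e1
  have hinv3 : ∀ g ∈ GS S.toEquiv T.toEquiv, ∀ s : Set (X × X),
      MeasurableSet s → μS (⇑g ⁻¹' s) = μS s := by
    intro g hg s hs
    obtain ⟨hgm, _, hmapg, _⟩ := hP g hg
    rw [← Measure.map_apply hgm hs, hmapg]

  -- Part 4 : uniqueness
  have hπS' : ∀ x, πW (S.symm x) = πW x := by
    intro x
    conv_rhs => rw [← S.apply_symm_apply x]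
    rw [hπS]
  have hπzpow : ∀ (i : ℤ) (x : X), πW ((S.toEquiv ^ i) x) = πW x := by
    intro i
    induction i using Int.induction_on with
    | zero => intro x; simp
    | succ i ih =>
      intro x
      have h1 : (S.toEquiv ^ ((i:ℤ) + 1)) x = (S.toEquiv ^ (i:ℤ)) (S x) := by
        rw [zpow_add_one]
        rfl
      rw [h1, ih (S x), hπS x]
    | pred i ih =>
      intro x
      have h1 : (S.toEquiv ^ (-(i:ℤ) - 1)) x = (S.toEquiv ^ (-(i:ℤ))) (S.symm x) := by
        rw [zpow_sub_one]
        rfl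
      rw [h1, ih (S.symm x), hπS' x]
  refine ⟨hProbS, hsupp, hinv3, ?_⟩
  intro ν hνprob hνsupp hνinv
  haveI := hνprob
  have hside_mem : side2 S.toEquiv ∈ GS S.toEquiv T.toEquiv :=
    Subgroup.subset_closure (Or.inl rfl)
  have hSmem : S.toEquiv ∈ Subgroup.closure {S.toEquiv, T.toEquiv} :=
    Subgroup.subset_closure (Set.mem_insert _ _)
  have hTmem : T.toEquiv ∈ Subgroup.closure {S.toEquiv, T.toEquiv} :=
    Subgroup.subset_closure (Set.mem_insert_of_mem _ rfl)
  have hdiagS_mem : diag2 S.toEquiv ∈ GS S.toEquiv T.toEquiv :=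
    Subgroup.subset_closure (Or.inr ⟨S.toEquiv, hSmem, rfl⟩)
  have hdiagT_mem : diag2 T.toEquiv ∈ GS S.toEquiv T.toEquiv :=
    Subgroup.subset_closure (Or.inr ⟨T.toEquiv, hTmem, rfl⟩)
  have hνmap : ∀ g : Equiv.Perm (X × X), g ∈ GS S.toEquiv T.toEquiv → Measurable ⇑g →
      Measure.map ⇑g ν = ν := by
    intro g hg hgm
    refine Measure.ext fun s hs => ?_
    rw [Measure.map_apply hgm hs]
    exact hνinv g hg s hs
  have hmeas_side : Measurable ⇑(side2 S.toEquiv) :=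
    measurable_fst.prodMk (hSmeas.comp measurable_snd)
  have hmeas_diagS : Measurable ⇑(diag2 S.toEquiv) :=
    (hSmeas.comp measurable_fst).prodMk (hSmeas.comp measurable_snd)
  have hmeas_diagT : Measurable ⇑(diag2 T.toEquiv) :=
    (hTmeas.comp measurable_fst).prodMk (hTmeas.comp measurable_snd)
  have hν_side := hνmap _ hside_mem hmeas_side
  have hν_diagS := hνmap _ hdiagS_mem hmeas_diagS
  have hν_diagT := hνmap _ hdiagT_mem hmeas_diagT
  have hsnd : Measure.map Prod.snd ν = μ := by
    refine huniq _ (Measure.isProbabilityMeasure_map measurable_snd.aemeasurable) ?_ ?_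
    · refine ⟨hSmeas, ?_⟩
      rw [Measure.map_map hSmeas measurable_snd]
      have hcompeq : ⇑S ∘ (Prod.snd : X × X → X) = Prod.snd ∘ ⇑(side2 S.toEquiv) := rfl
      rw [hcompeq, ← Measure.map_map measurable_snd hmeas_side, hν_side]
    · refine ⟨hTmeas, ?_⟩
      rw [Measure.map_map hTmeas measurable_snd]
      have hcompeq : ⇑T ∘ (Prod.snd : X × X → X) = Prod.snd ∘ ⇑(diag2 T.toEquiv) := rfl
      rw [hcompeq, ← Measure.map_map measurable_snd hmeas_diagT, hν_diagT]
  have hfst : Measure.map Prod.fst ν = μ := by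
    refine huniq _ (Measure.isProbabilityMeasure_map measurable_fst.aemeasurable) ?_ ?_
    · refine ⟨hSmeas, ?_⟩
      rw [Measure.map_map hSmeas measurable_fst]
      have hcompeq : ⇑S ∘ (Prod.fst : X × X → X) = Prod.fst ∘ ⇑(diag2 S.toEquiv) := rfl
      rw [hcompeq, ← Measure.map_map measurable_fst hmeas_diagS, hν_diagS]
    · refine ⟨hTmeas, ?_⟩
      rw [Measure.map_map hTmeas measurable_fst]
      have hcompeq : ⇑T ∘ (Prod.fst : X × X → X) = Prod.fst ∘ ⇑(diag2 T.toEquiv) := rfl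
      rw [hcompeq, ← Measure.map_map measurable_fst hmeas_diagT, hν_diagT]
  have hπQ : pairQ S ⊆ {p : X × X | πW p.1 = πW p.2} := by
    refine closure_minimal ?_
      (isClosed_eq (hπcont.comp continuous_fst) (hπcont.comp continuous_snd))
    rintro p ⟨x, i, rfl⟩
    show πW x = πW ((S.toEquiv ^ i) x)
    exact (hπzpow i x).symm
  have hνgraph : ν {p : X × X | ¬ πW p.1 = πW p.2} = 0 :=
    measure_mono_null (fun p hp hmem => hp (hπQ hmem)) hνsupp
  have hbridge : ∀ B : Set X, MeasurableSet B → ∃ h' : W → ℝ, Measurable h' ∧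
      (μ[ind B|invSigma ⇑S]) =ᵐ[μ] fun x => h' (πW x) := by
    intro B hB
    have hBint : Integrable (ind B) μ :=
      (MemLp.of_bound (ind_measurable hB).aestronglyMeasurable 1
        (Filter.Eventually.of_forall fun x => by
          simpa [Real.norm_eq_abs] using ind_abs_le B x)).integrable le_rfl
    have h1 := PCUE.condexp_invSigma_eq_comap (μ := μ) hπcont.measurable hπS hfactor hBint
    obtain ⟨h', hh', hfac⟩ := PCUE.exists_factor_of_measurable_comap hπsurj
      ((stronglyMeasurable_condExp
        (m := MeasurableSpace.comap πW ‹MeasurableSpace W›)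
        (f := ind B) (μ := μ)).measurable)
    refine ⟨h', hh', ?_⟩
    refine h1.trans ?_
    rw [hfac]
    exact Filter.Eventually.of_forall fun x => rfl
  have hrectν : ∀ A B : Set X, MeasurableSet A → MeasurableSet B →
      ν (A ×ˢ B) = μS (A ×ˢ B) := by
    intro A B hA hB
    obtain ⟨h', hh', hbr⟩ := hbridge B hB
    have hmeas_sidefun : Measurable (fun p : X × X => (p.1, S p.2)) :=
      measurable_fst.prodMk (hSmeas.comp measurable_snd)
    have hiter_map : ∀ i : ℕ,
        Measure.map ((fun p : X × X => (p.1, S p.2))^[i]) ν = ν := by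
      intro i
      induction i with
      | zero => simpa using Measure.map_id
      | succ i ih =>
        rw [Function.iterate_succ']
        rw [← Measure.map_map hmeas_sidefun (hmeas_sidefun.iterate i), ih]
        have : (fun p : X × X => (p.1, S p.2)) = ⇑(side2 S.toEquiv) := rfl
        rw [this, hν_side]
    have hside_iter_coe : ∀ i : ℕ, (fun p : X × X => (p.1, S p.2))^[i]
        = fun p : X × X => (p.1, (⇑S)^[i] p.2) := by
      intro i
      induction i with
      | zero => funext p; simp
      | succ i ih =>
        funext p
        rw [Function.iterate_succ_apply', ih]
        simp [Function.iterate_succ_apply']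
    have hterm : ∀ i : ℕ, ∫ p : X × X, ind A p.1 * ind B ((⇑S)^[i] p.2) ∂ν
        = (ν (A ×ˢ B)).toReal := by
      intro i
      have hpre : (fun p : X × X => (p.1, (⇑S)^[i] p.2)) ⁻¹' (A ×ˢ B)
          = A ×ˢ ((⇑S)^[i] ⁻¹' B) := by
        ext p; simp [Set.mem_prod]
      calc ∫ p : X × X, ind A p.1 * ind B ((⇑S)^[i] p.2) ∂ν
          = ∫ p : X × X, ind (A ×ˢ ((⇑S)^[i] ⁻¹' B)) p ∂ν := by
            refine integral_congr_ae (Filter.Eventually.of_forall fun p => ?_)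
            show ind A p.1 * ind B ((⇑S)^[i] p.2) = ind (A ×ˢ ((⇑S)^[i] ⁻¹' B)) p
            have h3 : ind B ((⇑S)^[i] p.2) = ind ((⇑S)^[i] ⁻¹' B) p.2 :=
              congrFun (ind_comp B _) p.2
            rw [h3, ind_mul_ind]
        _ = (ν (A ×ˢ ((⇑S)^[i] ⁻¹' B))).toReal :=
            integral_ind (hA.prod ((hSmeas.iterate i) hB))
        _ = (ν (A ×ˢ B)).toReal := by
            have h2 : A ×ˢ ((⇑S)^[i] ⁻¹' B)
                = (fun p : X × X => (p.1, S p.2))^[i] ⁻¹' (A ×ˢ B) := by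
              rw [hside_iter_coe i]
              exact hpre.symm
            rw [h2, ← Measure.map_apply (hmeas_sidefun.iterate i) (hA.prod hB), hiter_map i]
    have hAavg : ∀ N : ℕ, 1 ≤ N →
        ∫ p : X × X, ind A p.1 * birkhoffAverage ℝ ⇑S (ind B) N p.2 ∂ν
          = (ν (A ×ˢ B)).toReal := by
      intro N hN
      have hint : ∀ i : ℕ,
          Integrable (fun p : X × X => ind A p.1 * ind B ((⇑S)^[i] p.2)) ν := by
        intro i
        have hmeasi : Measurable (fun p : X × X => ind A p.1 * ind B ((⇑S)^[i] p.2)) :=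
          ((ind_measurable hA).comp measurable_fst).mul
            ((ind_measurable hB).comp ((hSmeas.iterate i).comp measurable_snd))
        refine (MemLp.of_bound hmeasi.aestronglyMeasurable 1
          (Filter.Eventually.of_forall fun p => ?_)).integrable le_rfl
        rw [Real.norm_eq_abs, abs_mul]
        calc |ind A p.1| * |ind B ((⇑S)^[i] p.2)| ≤ 1 * 1 :=
              mul_le_mul (ind_abs_le _ _) (ind_abs_le _ _) (abs_nonneg _) zero_le_one
          _ = 1 := by ring
      have hexp : ∀ p : X × X, ind A p.1 * birkhoffAverage ℝ ⇑S (ind B) N p.2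
          = (N:ℝ)⁻¹ • ∑ i ∈ Finset.range N, ind A p.1 * ind B ((⇑S)^[i] p.2) := by
        intro p
        show ind A p.1 * ((N:ℝ)⁻¹ • ∑ i ∈ Finset.range N, ind B ((⇑S)^[i] p.2)) = _
        rw [smul_eq_mul, smul_eq_mul, mul_left_comm, Finset.mul_sum]
      rw [integral_congr_ae (Filter.Eventually.of_forall hexp)]
      rw [integral_smul, integral_finset_sum _ fun i _ => hint i]
      rw [Finset.sum_congr rfl fun i _ => hterm i, Finset.sum_const, Finset.card_range]
      have hN0 : (N:ℝ) ≠ 0 := by positivity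
      rw [nsmul_eq_mul, smul_eq_mul, ← mul_assoc, inv_mul_cancel₀ hN0, one_mul]
    have htendν := PCUE.met_pair hSinv (ind_measurable hB) zero_le_one (ind_abs_le B)
      ν measurable_snd hsnd
      (show Measurable fun p : X × X => ind A p.1 from
        (ind_measurable hA).comp measurable_fst) zero_le_one
      (fun p => ind_abs_le A p.1)
    have hlim1 : ∫ p : X × X, ind A p.1 * (μ[ind B|invSigma ⇑S]) p.2 ∂ν
        = (ν (A ×ˢ B)).toReal := by
      refine tendsto_nhds_unique htendν ?_
      refine Filter.Tendsto.congr' ?_ tendsto_const_nhds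
      filter_upwards [Filter.eventually_ge_atTop 1] with N hN
      exact (hAavg N hN).symm
    have hnull1 : ∀ᵐ p : X × X ∂ν, (μ[ind B|invSigma ⇑S]) p.2 = h' (πW p.2) := by
      have h0 : μ {x | ¬ (μ[ind B|invSigma ⇑S]) x = h' (πW x)} = 0 := by
        have h1 := hbr
        rwa [Filter.EventuallyEq, MeasureTheory.ae_iff] at h1
      obtain ⟨Nt, hNsub, hNmeas, hNnull⟩ := exists_measurable_superset_of_null h0
      have hν0 : ν (Prod.snd ⁻¹' Nt) = 0 := by
        rw [← Measure.map_apply measurable_snd hNmeas, hsnd]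
        exact hNnull
      rw [MeasureTheory.ae_iff]
      exact measure_mono_null (t := Prod.snd ⁻¹' Nt)
        (fun p hp => Set.mem_preimage.mpr (hNsub hp)) hν0
    have hnull2 : ∀ᵐ p : X × X ∂ν, πW p.1 = πW p.2 := by
      rw [MeasureTheory.ae_iff]
      exact hνgraph
    have hchain : ∫ p : X × X, ind A p.1 * (μ[ind B|invSigma ⇑S]) p.2 ∂ν
        = ∫ p : X × X, ind A p.1 * h' (πW p.1) ∂ν := by
      refine integral_congr_ae ?_
      filter_upwards [hnull1, hnull2] with p h1 h2
      rw [h1, ← h2]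
    have hfst_int : ∫ p : X × X, ind A p.1 * h' (πW p.1) ∂ν
        = ∫ x, ind A x * h' (πW x) ∂μ := by
      have hmeasG : Measurable fun x : X => ind A x * h' (πW x) :=
        (ind_measurable hA).mul (hh'.comp hπcont.measurable)
      have hG : AEStronglyMeasurable (fun x : X => ind A x * h' (πW x))
          (Measure.map Prod.fst ν) := by
        rw [hfst]
        exact hmeasG.aestronglyMeasurable
      calc ∫ p : X × X, ind A p.1 * h' (πW p.1) ∂ν
          = ∫ x, ind A x * h' (πW x) ∂(Measure.map Prod.fst ν) :=
            (integral_map measurable_fst.aemeasurable hG).symm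
        _ = ∫ x, ind A x * h' (πW x) ∂μ := by rw [hfst]
    have hback : ∫ x, ind A x * h' (πW x) ∂μ = (μS (A ×ˢ B)).toReal := by
      have h1 : ∫ x, ind A x * h' (πW x) ∂μ
          = ∫ x, ind A x * (μ[ind B|invSigma ⇑S]) x ∂μ := by
        refine integral_congr_ae ?_
        filter_upwards [hbr] with x hx
        rw [hx]
      rw [h1, PCUE.integral_mul_condexp ⇑S (ind_measurable hA) (ind_abs_le A)
        (ind_measurable hB) (ind_abs_le B), ← hrect A B hA hB]
    refine (ENNReal.toReal_eq_toReal_iff' (measure_ne_top _ _) (measure_ne_top _ _)).mp ?_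
    rw [← hlim1, hchain, hfst_int, hback]
  exact PCUE.prob_ext_prod hrectν
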